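/- Let X and Y be sets and f : X × Y → [0,1]. Then f has the double limit property if and only if f_c : conv_δ(X) × conv_δ(Y) → [0,1] has the double limit property. -/

import Mathlib

open Filter Topology

/-- A Boolean algebra of sets on `X`: contains `∅` and `univ`, closed under
finite unions, finite intersections and complements. -/
def IsBoolAlg {X : Type*} (C : Set (Set X)) : Prop :=
  ∅ ∈ C ∧ Set.univ ∈ C ∧
    (∀ A ∈ C, ∀ B ∈ C, A ∪ B ∈ C) ∧
    (∀ A ∈ C, ∀ B ∈ C, A ∩ B ∈ C) ∧
    (∀ A ∈ C, Aᶜ ∈ C)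

/-- An ultrafilter on a Boolean algebra of sets `C`. -/
def IsUltraOn {X : Type*} (C : Set (Set X)) (U : Set (Set X)) : Prop :=
  U ⊆ C ∧ ∅ ∉ U ∧ Set.univ ∈ U ∧
    (∀ A ∈ U, ∀ B ∈ U, A ∩ B ∈ U) ∧
    (∀ A ∈ U, ∀ B ∈ C, A ⊆ B → B ∈ U) ∧
    (∀ A ∈ C, A ∈ U ∨ Aᶜ ∈ U)

/-- A finitely additive probability measure on `C`. -/
def IsFAP {X : Type*} (C : Set (Set X)) (μ : Set X → ℝ) : Prop :=
  (∀ A ∈ C, 0 ≤ μ A) ∧ μ Set.univ = 1 ∧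
    (∀ A ∈ C, ∀ B ∈ C, A ∩ B = ∅ → μ (A ∪ B) = μ A + μ B)

/-- `μ` is strongly continuous on `C`: for every `ε > 0` there is a finite
partition of `X` into members of `C`, each of measure `< ε`. -/
def StrongCont {X : Type*} (C : Set (Set X)) (μ : Set X → ℝ) : Prop :=
  ∀ ε : ℝ, 0 < ε → ∃ (n : ℕ) (F : Fin n → Set X),
    (∀ i, F i ∈ C) ∧ (⋃ i, F i) = Set.univ ∧
    (∀ i j, i ≠ j → F i ∩ F j = ∅) ∧ ∀ i, μ (F i) < ε

/-- `μ` is `{0,1}`-valued on `C`. -/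
def ZeroOneValued {X : Type*} (C : Set (Set X)) (μ : Set X → ℝ) : Prop :=
  ∀ A ∈ C, μ A = 0 ∨ μ A = 1

/-- A 2-tree in `C`: an injective map from finite binary strings into `C` such
that children are strictly below their parent and the two children of a node
are disjoint. -/
def IsTwoTree {X : Type*} (C : Set (Set X)) (t : List Bool → Set X) : Prop :=
  Function.Injective t ∧ (∀ s, t s ∈ C) ∧
    (∀ s b, t (s ++ [b]) ⊂ t s) ∧
    ∀ s, t (s ++ [false]) ∩ t (s ++ [true]) = ∅

/-- The double limit property for `f : A × B → ℝ`: whenever both iterated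
limits along sequences exist, they are equal. -/
def DLP {A B : Type*} (f : A → B → ℝ) : Prop :=
  ∀ (a : ℕ → A) (b : ℕ → B) (u v : ℕ → ℝ) (L L' : ℝ),
    (∀ i, Tendsto (fun j => f (a i) (b j)) atTop (𝓝 (u i))) →
    Tendsto u atTop (𝓝 L) →
    (∀ j, Tendsto (fun i => f (a i) (b j)) atTop (𝓝 (v j))) →
    Tendsto v atTop (𝓝 L') → L = L'

-- The indicator `χ_R` of a relation `R ⊆ X × Y`.
open Classical in
noncomputable def chi {X Y : Type*} (R : Set (X × Y)) : X → Y → ℝ :=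
  fun a b => if (a, b) ∈ R then 1 else 0

/-- The Boolean algebra of sets generated by `S`. -/
def genAlg {X : Type*} (S : Set (Set X)) : Set (Set X) :=
  ⋂₀ {C : Set (Set X) | IsBoolAlg C ∧ S ⊆ C}

/-- `C_X(R)`: the Boolean algebra on `X` generated by the columns of `R`. -/
def colAlg {X Y : Type*} (R : Set (X × Y)) : Set (Set X) :=
  genAlg {A | ∃ b : Y, A = {x : X | (x, b) ∈ R}}

/-- `C_Y(R)`: the Boolean algebra on `Y` generated by the rows of `R`. -/
def rowAlg {X Y : Type*} (R : Set (X × Y)) : Set (Set Y) :=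
  genAlg {B | ∃ a : X, B = {y : Y | (a, y) ∈ R}}

/-- `d_U = {b ∈ Y : {x : (x,b) ∈ R} ∈ U}`. -/
def dSet {X Y : Type*} (R : Set (X × Y)) (U : Set (Set X)) : Set Y :=
  {b : Y | {x : X | (x, b) ∈ R} ∈ U}

/-- `e_V = {a ∈ X : {y : (a,y) ∈ R} ∈ V}`. -/
def eSet {X Y : Type*} (R : Set (X × Y)) (V : Set (Set Y)) : Set X :=
  {a : X | {y : Y | (a, y) ∈ R} ∈ V}

/-- Membership in `conv_δ(Z)`: a nonnegative, countably supported weight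
function summing to `1`. -/
def IsConvDelta {Z : Type*} (p : Z → ℝ) : Prop :=
  (∀ z, 0 ≤ p z) ∧ (Function.support p).Countable ∧ HasSum p 1

/-- `f_c(p, q) = ∑_{(x,y)} p(x) q(y) f(x,y)`. -/
noncomputable def fc {X Y : Type*} (f : X → Y → ℝ) (p : X → ℝ) (q : Y → ℝ) : ℝ :=
  ∑' z : X × Y, p z.1 * q z.2 * f z.1 z.2

/-- The `k`-order property for a relation `R ⊆ X × Y`. -/
def HasKOrderProp {X Y : Type*} (R : Set (X × Y)) (k : ℕ) : Prop :=
  ∃ (a : Fin k → X) (b : Fin k → Y), ∀ i j, (a i, b j) ∈ R ↔ i < j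

-- The pairing `χ(U, V)` on ultrafilters: `1` if `d_U ∈ V`, else `0`.
open Classical in
noncomputable def chiU {X Y : Type*} (R : Set (X × Y))
    (U : {U : Set (Set X) // IsUltraOn (colAlg R) U})
    (V : {V : Set (Set Y) // IsUltraOn (rowAlg R) V}) : ℝ :=
  if dSet R U.1 ∈ V.1 then 1 else 0

/-- `𝓕` shatters the finite set `S`. -/
def ShattersSet {X : Type*} (F : Set (Set X)) (S : Finset X) : Prop :=
  ∀ T ⊆ S, ∃ A ∈ F, A ∩ ↑S = (↑T : Set X)

/-- An atomic probability measure on `X`. -/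
def IsAtomicMeasure {X : Type*} (μ : Set X → ℝ) : Prop :=
  ∃ (I : Set ℕ) (x : ℕ → X) (r : ℕ → ℝ),
    (∀ i ∈ I, 0 ≤ r i) ∧ HasSum (fun i : I => r (i : ℕ)) 1 ∧
    ∀ A : Set X, μ A = ∑' i : {i : ℕ // i ∈ I ∧ x i ∈ A}, r (i : ℕ)

section DLPAux

open Set

namespace DLPWork


/-! ### Basic mass function for countably supported weights -/

noncomputable def qmass {Y : Type*} (q : Y → ℝ) (A : Set Y) : ℝ := ∑' y, A.indicator q y

variable {Y : Type*} {q : Y → ℝ} {A B : Set Y}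

lemma qmass_nonneg (hq0 : ∀ y, 0 ≤ q y) : 0 ≤ qmass q A :=
  tsum_nonneg fun y => Set.indicator_nonneg (fun y _ => hq0 y) y

lemma summable_indicator' (hqs : Summable q) (A : Set Y) : Summable (A.indicator q) :=
  hqs.indicator A

lemma qmass_union (hq0 : ∀ y, 0 ≤ q y) (hqs : Summable q) (hd : Disjoint A B) :
    qmass q (A ∪ B) = qmass q A + qmass q B := by
  unfold qmass
  rw [← Summable.tsum_add (hqs.indicator A) (hqs.indicator B)]
  congr 1
  ext y
  rw [Set.indicator_union_of_disjoint hd]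

lemma qmass_univ (hq1 : ∑' y, q y = 1) : qmass q Set.univ = 1 := by
  unfold qmass; rw [Set.indicator_univ]; exact hq1

lemma qmass_mono (hq0 : ∀ y, 0 ≤ q y) (hqs : Summable q) (h : A ⊆ B) :
    qmass q A ≤ qmass q B :=
  Summable.tsum_le_tsum (fun y => Set.indicator_le_indicator_of_subset h (fun a => hq0 a) y)
    (hqs.indicator A) (hqs.indicator B)

lemma qmass_le_one (hq0 : ∀ y, 0 ≤ q y) (hqs : Summable q) (hq1 : ∑' y, q y = 1) :
    qmass q A ≤ 1 := by
  have := qmass_mono (A := A) (B := Set.univ) hq0 hqs (Set.subset_univ A)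
  rwa [qmass_univ hq1] at this

lemma qmass_pos_exists (hq0 : ∀ y, 0 ≤ q y) (h : 0 < qmass q A) :
    ∃ y ∈ A, 0 < q y := by
  by_contra hc
  push_neg at hc
  have hz : A.indicator q = 0 := by
    ext y
    by_cases hy : y ∈ A
    · simp [Set.indicator_of_mem hy, le_antisymm (hc y hy) (hq0 y)]
    · simp [Set.indicator_of_notMem hy]
  rw [qmass, hz] at h
  simp at h

lemma qmass_compl (hq0 : ∀ y, 0 ≤ q y) (hqs : Summable q) (hq1 : ∑' y, q y = 1) :
    qmass q Aᶜ = 1 - qmass q A := by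
  have h := qmass_union (A := A) (B := Aᶜ) hq0 hqs disjoint_compl_right
  rw [Set.union_compl_self, qmass_univ hq1] at h
  linarith

/-- Finite additivity over a finset-indexed disjoint union. -/
lemma qmass_biUnion {ι : Type*} (hq0 : ∀ y, 0 ≤ q y) (hqs : Summable q)
    (S : Finset ι) (A : ι → Set Y)
    (hd : ∀ i ∈ S, ∀ j ∈ S, i ≠ j → Disjoint (A i) (A j)) :
    qmass q (⋃ i ∈ S, A i) = ∑ i ∈ S, qmass q (A i) := by
  classical
  induction S using Finset.induction_on with
  | empty => simp [qmass]
  | @insert a S ha ih =>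
      rw [Finset.set_biUnion_insert, Finset.sum_insert ha,
        qmass_union hq0 hqs, ih]
      · intro i hi j hj hij
        exact hd i (Finset.mem_insert_of_mem hi) j (Finset.mem_insert_of_mem hj) hij
      · -- Disjoint (A a) (⋃ i ∈ S, A i)
        refine Set.disjoint_iUnion₂_right.mpr fun i hi => ?_
        exact hd a (Finset.mem_insert_self a S) i (Finset.mem_insert_of_mem hi)
          (by rintro rfl; exact ha hi)



/-- Diagonal extraction: a common subsequence along which countably many
`[0,1]`-valued sequences all converge. -/
lemma diag {ι : Type*} [Countable ι] (F : ι → ℕ → ℝ)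
    (hF : ∀ i k, F i k ∈ Set.Icc (0:ℝ) 1) :
    ∃ φ : ℕ → ℕ, StrictMono φ ∧ ∀ i, ∃ c, Tendsto (fun k => F i (φ k)) atTop (𝓝 c) := by
  have hS : IsCompact (Set.pi Set.univ (fun _ : ι => Set.Icc (0:ℝ) 1)) :=
    isCompact_univ_pi fun _ => isCompact_Icc
  obtain ⟨a, _, φ, hφ, hconv⟩ :=
    hS.tendsto_subseq (x := fun k i => F i k) (fun k i _ => hF i k)
  refine ⟨φ, hφ, fun i => ⟨a i, ?_⟩⟩
  exact ((continuous_apply i).continuousAt.tendsto).comp hconv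

lemma dlp_flip {A B : Type*} {f : A → B → ℝ} (h : DLP f) : DLP (fun b a => f a b) :=
  fun a b u v L L' h1 h2 h3 h4 => (h b a v u L' L h3 h4 h1 h2).symm

lemma dlp_oneSub {A B : Type*} {f : A → B → ℝ} (h : DLP f) :
    DLP (fun a b => 1 - f a b) := by
  intro a b u v L L' h1 h2 h3 h4
  have h1' : ∀ i, Tendsto (fun j => f (a i) (b j)) atTop (𝓝 (1 - u i)) := by
    intro i
    have := (h1 i).const_sub 1
    simpa using this
  have h3' : ∀ j, Tendsto (fun i => f (a i) (b j)) atTop (𝓝 (1 - v j)) := by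
    intro j
    have := (h3 j).const_sub 1
    simpa using this
  have h2' : Tendsto (fun i => 1 - u i) atTop (𝓝 (1 - L)) := by simpa using h2.const_sub 1
  have h4' : Tendsto (fun j => 1 - v j) atTop (𝓝 (1 - L')) := by simpa using h4.const_sub 1
  have := h a b (fun i => 1 - u i) (fun j => 1 - v j) (1 - L) (1 - L') h1' h2' h3' h4'
  linarith



variable {q : Y → ℝ}


lemma IsConvDelta.summable (hq : IsConvDelta q) : Summable q := hq.2.2.summable

lemma IsConvDelta.tsum_eq (hq : IsConvDelta q) : ∑' y, q y = 1 := hq.2.2.tsum_eq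

/-- Summability of `q * g` for bounded `g`. -/
lemma summable_mul_bdd (hq0 : ∀ y, 0 ≤ q y) (hqs : Summable q)
    {g : Y → ℝ} (hg : ∀ y, |g y| ≤ 1) : Summable (fun y => q y * g y) := by
  refine Summable.of_norm_bounded hqs fun y => ?_
  rw [Real.norm_eq_abs, abs_mul, abs_of_nonneg (hq0 y)]
  calc q y * |g y| ≤ q y * 1 := by
        exact mul_le_mul_of_nonneg_left (hg y) (hq0 y)
    _ = q y := mul_one _

lemma pair_nonneg (hq0 : ∀ y, 0 ≤ q y) {g : Y → ℝ} (hg : ∀ y, 0 ≤ g y) :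
    0 ≤ ∑' y, q y * g y :=
  tsum_nonneg fun y => mul_nonneg (hq0 y) (hg y)

lemma pair_le_one (hq0 : ∀ y, 0 ≤ q y) (hqs : Summable q) (hq1 : ∑' y, q y = 1)
    {g : Y → ℝ} (hg : ∀ y, g y ∈ Set.Icc (0:ℝ) 1) :
    ∑' y, q y * g y ≤ 1 := by
  have : ∑' y, q y * g y ≤ ∑' y, q y := by
    refine Summable.tsum_le_tsum (fun y => ?_)
      (summable_mul_bdd hq0 hqs fun y => abs_le.mpr ⟨by linarith [(hg y).1], (hg y).2⟩) hqs
    calc q y * g y ≤ q y * 1 := mul_le_mul_of_nonneg_left (hg y).2 (hq0 y)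
      _ = q y := mul_one _
  linarith [this, hq1.le]

/-- The mass of the super-level set `{γ < D}` is at least `⟨q, D⟩ - γ`
whenever `D ≤ 1` pointwise. -/
lemma qmass_superlevel (hq0 : ∀ y, 0 ≤ q y) (hqs : Summable q) (hq1 : ∑' y, q y = 1)
    {D : Y → ℝ} (hD : ∀ y, |D y| ≤ 1) {γ : ℝ} (hγ : 0 ≤ γ) :
    (∑' y, q y * D y) - γ ≤ qmass q {y | γ < D y} := by
  set A : Set Y := {y | γ < D y}
  have hpt : ∀ y, q y * D y ≤ A.indicator q y + γ * Aᶜ.indicator q y := by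
    intro y
    by_cases hy : y ∈ A
    · rw [Set.indicator_of_mem hy, Set.indicator_of_notMem (by simpa using hy)]
      have : q y * D y ≤ q y * 1 := mul_le_mul_of_nonneg_left (abs_le.mp (hD y)).2 (hq0 y)
      simpa using this
    · rw [Set.indicator_of_notMem hy, Set.indicator_of_mem (by simpa using hy)]
      have hDy : D y ≤ γ := le_of_not_gt hy
      have : q y * D y ≤ q y * γ := mul_le_mul_of_nonneg_left hDy (hq0 y)
      linarith [this]
  have hsum : ∑' y, q y * D y ≤ qmass q A + γ * qmass q Aᶜ := by
    have hs1 : Summable (A.indicator q) := hqs.indicator A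
    have hs2 : Summable (fun y => γ * Aᶜ.indicator q y) := (hqs.indicator Aᶜ).mul_left γ
    have := Summable.tsum_le_tsum hpt (summable_mul_bdd hq0 hqs hD) (hs1.add hs2)
    rwa [Summable.tsum_add hs1 hs2, tsum_mul_left] at this
  have hcompl : qmass q Aᶜ = 1 - qmass q A := qmass_compl hq0 hqs hq1
  have h01 : qmass q A ≤ 1 := qmass_le_one hq0 hqs hq1
  have h00 : 0 ≤ qmass q A := qmass_nonneg hq0
  nlinarith [hsum, hcompl]



variable {X Y : Type*}

open Classical in
lemma isConvDelta_delta (x : X) :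
    IsConvDelta (fun x' => if x' = x then (1:ℝ) else 0) := by
  refine ⟨fun z => by positivity, ?_, hasSum_ite_eq x 1⟩
  refine Set.Countable.mono ?_ (Set.countable_singleton x)
  intro z hz
  simp only [Function.mem_support] at hz
  by_contra h
  simp only [Set.mem_singleton_iff] at h
  exact hz (if_neg h)

open Classical in
lemma fc_delta (f : X → Y → ℝ) (x : X) (y : Y) :
    ∑' z : X × Y, (if z.1 = x then (1:ℝ) else 0) * (if z.2 = y then (1:ℝ) else 0)
      * f z.1 z.2 = f x y := by
  rw [tsum_eq_single (x, y)]
  · simp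
  · rintro ⟨a, b⟩ hab
    by_cases ha : a = x
    · have hb : b ≠ y := by rintro rfl; exact hab (by rw [ha])
      simp [if_neg hb]
    · simp [if_neg ha]

/-- Fubini for the convex pairing. -/
lemma fc_eq (f : X → Y → ℝ) (hf : ∀ x y, f x y ∈ Set.Icc (0:ℝ) 1)
    {p : X → ℝ} {q : Y → ℝ} (hp : IsConvDelta p) (hq : IsConvDelta q) :
    ∑' z : X × Y, p z.1 * q z.2 * f z.1 z.2
      = ∑' x, p x * ∑' y, q y * f x y := by
  have hb : Summable (fun z : X × Y => p z.1 * q z.2) :=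
    hp.2.2.summable.mul_of_nonneg hq.2.2.summable hp.1 hq.1
  have hs : Summable (fun z : X × Y => p z.1 * q z.2 * f z.1 z.2) := by
    refine hb.of_nonneg_of_le (fun z => ?_) (fun z => ?_)
    · exact mul_nonneg (mul_nonneg (hp.1 _) (hq.1 _)) (hf _ _).1
    · calc p z.1 * q z.2 * f z.1 z.2 ≤ p z.1 * q z.2 * 1 :=
            mul_le_mul_of_nonneg_left (hf _ _).2 (mul_nonneg (hp.1 _) (hq.1 _))
        _ = p z.1 * q z.2 := mul_one _
  rw [Summable.tsum_prod' hs fun x => ?_]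
  · congr 1
    ext x
    rw [← tsum_mul_left]
    congr 1
    ext y
    ring
  · -- summability of each row
    refine Summable.of_nonneg_of_le (fun y => ?_) (fun y => ?_)
      ((hq.2.2.summable.mul_left (p x)))
    · exact mul_nonneg (mul_nonneg (hp.1 _) (hq.1 _)) (hf _ _).1
    · calc p x * q y * f x y ≤ p x * q y * 1 :=
          mul_le_mul_of_nonneg_left (hf _ _).2 (mul_nonneg (hp.1 _) (hq.1 _))
        _ = p x * q y := mul_one _



open Classical in
/-- The branch state of `x` in the interval-splitting scheme driven by the
cylinder weights `c`. -/
noncomputable def stX (c : ℕ → Finset ℕ → ℝ) (x : ℝ) : ℕ → Finset ℕ × ℝ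
  | 0 => (∅, 0)
  | n+1 =>
      let p := stX c x n
      if x < p.2 + c (n+1) p.1 then p else (insert n p.1, p.2 + c (n+1) p.1)

variable {c : ℕ → Finset ℕ → ℝ} {γ : ℝ}

open Classical in
lemma stX_succ (x : ℝ) (n : ℕ) :
    stX c x (n+1) = if x < (stX c x n).2 + c (n+1) (stX c x n).1 then stX c x n
      else (insert n (stX c x n).1, (stX c x n).2 + c (n+1) (stX c x n).1) := rfl

lemma stX_subset (x : ℝ) : ∀ n, (stX c x n).1 ⊆ Finset.range n := by
  intro n
  induction n with
  | zero => simp [stX]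
  | succ n ih =>
      rw [stX_succ]
      split
      · exact ih.trans (Finset.range_subset_range.mpr (Nat.le_succ n))
      · intro i hi
        simp only [Finset.mem_insert] at hi
        rcases hi with rfl | hi
        · simp
        · exact (Finset.range_subset_range.mpr (Nat.le_succ n)) (ih hi)

lemma stX_inv (c0 : c 0 ∅ = 1) (cadd : ∀ n K, n ∉ K → c n K = c (n+1) K + c (n+1) (insert n K))
    {x : ℝ} (hx : x ∈ Ico (0:ℝ) 1) :
    ∀ n, (stX c x n).2 ≤ x ∧ x < (stX c x n).2 + c n (stX c x n).1 := by
  intro n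
  induction n with
  | zero => simpa [stX, c0] using hx
  | succ n ih =>
      have hn : n ∉ (stX c x n).1 := fun h => by
        simpa using Finset.mem_range.mp (stX_subset x n h)
      rw [stX_succ]
      split_ifs with h
      · exact ⟨ih.1, h⟩
      · have hc := cadd n (stX c x n).1 hn
        have h2 := ih.2
        refine ⟨le_of_not_gt h, ?_⟩
        simp only
        linarith

/-- Membership of small indices in the branch set is stable as the level grows. -/
lemma stX_stable (x : ℝ) : ∀ N n, n ≤ N → ∀ i, i < n →
    (i ∈ (stX c x N).1 ↔ i ∈ (stX c x n).1) := by
  intro N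
  induction N with
  | zero => intro n hn i hi; interval_cases n; rfl
  | succ N ih =>
      intro n hn i hi
      rcases Nat.lt_or_ge n (N+1) with h | h
      · have hN : n ≤ N := Nat.lt_succ_iff.mp h
        rw [← ih n hN i hi]
        rw [stX_succ]
        split
        · rfl
        · simp only [Finset.mem_insert]
          constructor
          · rintro (rfl | h2)
            · exact absurd (hi.trans_le hN) (lt_irrefl _)
            · exact h2
          · exact Or.inr
      · have : n = N + 1 := le_antisymm hn h
        subst this; rfl

/-- The level-`n` branch-cylinder sets are intervals of length `c n K`. -/
lemma stX_interval (c0 : c 0 ∅ = 1) (cnn : ∀ n K, 0 ≤ c n K)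
    (cadd : ∀ n K, n ∉ K → c n K = c (n+1) K + c (n+1) (insert n K)) :
    ∀ n, ∀ K ⊆ Finset.range n, ∃ a : ℝ,
      (∀ x, x ∈ Ico (0:ℝ) 1 → (stX c x n).1 = K → (stX c x n).2 = a) ∧
      ({x | x ∈ Ico (0:ℝ) 1 ∧ (stX c x n).1 = K} = Ico a (a + c n K)) := by
  intro n
  induction n with
  | zero =>
      intro K hK
      rw [Finset.range_zero, Finset.subset_empty] at hK
      subst hK
      refine ⟨0, fun x _ _ => rfl, ?_⟩
      ext x
      simp only [Set.mem_setOf_eq, stX, zero_add, c0, Set.mem_Ico]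
      tauto
  | succ n IH =>
      intro K' hK'
      set K : Finset ℕ := K'.erase n with hKdef
      have hKr : K ⊆ Finset.range n := by
        intro i hi
        have h1 : i ∈ K' := Finset.mem_of_mem_erase hi
        have h2 : i ≠ n := Finset.ne_of_mem_erase hi
        have := Finset.mem_range.mp (hK' h1)
        exact Finset.mem_range.mpr (by omega)
      have hnK : n ∉ K := Finset.notMem_erase n K'
      obtain ⟨a, ha1, ha2⟩ := IH K hKr
      by_cases hn : n ∈ K'
      · -- true child
        have hKK' : K' = insert n K := (Finset.insert_erase hn).symm
        refine ⟨a + c (n+1) K, ?_, ?_⟩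
        · intro x hx hst
          rw [stX_succ] at hst ⊢
          split_ifs at hst ⊢ with h
          · exfalso
            have : n ∈ (stX c x n).1 := by rw [hst]; exact hn
            simpa using Finset.mem_range.mp (stX_subset x n this)
          · simp only at hst ⊢
            have hp1 : (stX c x n).1 = K := by
              have : (insert n (stX c x n).1).erase n = (K').erase n := by rw [hst]
              rwa [Finset.erase_insert (fun hmem => by
                simpa using Finset.mem_range.mp (stX_subset x n hmem))] at this
            rw [ha1 x hx hp1, hp1]
        · ext x
          constructor
          · rintro ⟨hx, hst⟩
            rw [stX_succ] at hst
            split_ifs at hst with h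
            · exfalso
              have : n ∈ (stX c x n).1 := by rw [hst]; exact hn
              simpa using Finset.mem_range.mp (stX_subset x n this)
            · simp only at hst
              have hp1 : (stX c x n).1 = K := by
                have : (insert n (stX c x n).1).erase n = (K').erase n := by rw [hst]
                rwa [Finset.erase_insert (fun hmem => by
                  simpa using Finset.mem_range.mp (stX_subset x n hmem))] at this
              have hp2 : (stX c x n).2 = a := ha1 x hx hp1
              have hinv := stX_inv c0 cadd hx (n+1)
              rw [stX_succ] at hinv
              rw [if_neg h] at hinv
              simp only at hinv
              rw [hp1, hp2] at h hinv
              constructor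
              · exact le_of_not_gt h
              · rw [hKK']
                linarith [hinv.2]
          · intro hx
            have hsub : x ∈ Ico a (a + c n K) := by
              have hcc := cadd n K hnK
              rw [← hKK'] at hcc
              simp only [Set.mem_Ico] at hx ⊢
              constructor
              · linarith [hx.1, cnn (n+1) K]
              · linarith [hx.2]
            rw [← ha2] at hsub
            obtain ⟨hx01, hstn⟩ := hsub
            have hpt2 : (stX c x n).2 = a := ha1 x hx01 hstn
            refine ⟨hx01, ?_⟩
            rw [stX_succ, if_neg ?_]
            · simp only
              rw [hstn, hKK']
            · rw [hstn, hpt2]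
              simp only [Set.mem_Ico] at hx
              exact not_lt.mpr hx.1
      · -- false child: K' = K
        have hKK : K = K' := by rw [hKdef, Finset.erase_eq_of_notMem hn]
        rw [hKK] at ha1 ha2
        refine ⟨a, ?_, ?_⟩
        · intro x hx hst
          rw [stX_succ] at hst ⊢
          split_ifs at hst ⊢ with h
          · exact ha1 x hx hst
          · exfalso
            simp only at hst
            apply hn
            rw [← hst]
            exact Finset.mem_insert_self n _
        · ext x
          constructor
          · rintro ⟨hx, hst⟩
            rw [stX_succ] at hst
            split_ifs at hst with h
            · have hpt2 : (stX c x n).2 = a := ha1 x hx hst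
              have hmem : x ∈ Ico a (a + c n K') := by
                rw [← ha2]; exact ⟨hx, hst⟩
              simp only [Set.mem_Ico] at hmem ⊢
              rw [hst, hpt2] at h
              exact ⟨hmem.1, h⟩
            · exfalso
              simp only at hst
              apply hn
              rw [← hst]
              exact Finset.mem_insert_self n _
          · intro hx
            have hnK' : n ∉ K' := hn
            have hcc := cadd n K' hnK'
            have hsub : x ∈ Ico a (a + c n K') := by
              simp only [Set.mem_Ico] at hx ⊢
              refine ⟨hx.1, lt_of_lt_of_le hx.2 ?_⟩
              rw [hKK] at hnK
              linarith [cnn (n+1) (insert n K')]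
            rw [← ha2] at hsub
            obtain ⟨hx01, hstn⟩ := hsub
            have hpt2 : (stX c x n).2 = a := ha1 x hx01 hstn
            refine ⟨hx01, ?_⟩
            rw [stX_succ, if_pos ?_]
            · exact hstn
            · rw [hstn, hpt2]
              simp only [Set.mem_Ico] at hx
              exact hx.2

/-- Main combinatorial lemma: cylinder weights with uniformly large marginals
admit an infinite set all of whose finite subsets are realized by positive
weight. -/
lemma interval_main (c : ℕ → Finset ℕ → ℝ) (γ : ℝ) (hγ : 0 < γ)
    (c0 : c 0 ∅ = 1) (cnn : ∀ n K, 0 ≤ c n K)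
    (cadd : ∀ n K, n ∉ K → c n K = c (n+1) K + c (n+1) (insert n K))
    (cmarg : ∀ n, γ ≤ ∑ K ∈ (Finset.range n).powerset, c (n+1) (insert n K)) :
    ∃ M : Set ℕ, M.Infinite ∧ ∀ T : Finset ℕ, ↑T ⊆ M →
      ∃ N K, K ⊆ Finset.range N ∧ T ⊆ K ∧ 0 < c N K := by
  classical
  have stS : ∀ n K, ∃ a : ℝ, K ⊆ Finset.range n →
      ((∀ x, x ∈ Ico (0:ℝ) 1 → (stX c x n).1 = K → (stX c x n).2 = a) ∧
      ({x | x ∈ Ico (0:ℝ) 1 ∧ (stX c x n).1 = K} = Ico a (a + c n K))) := by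
    intro n K
    by_cases h : K ⊆ Finset.range n
    · obtain ⟨a, h1, h2⟩ := stX_interval c0 cnn cadd n K h
      exact ⟨a, fun _ => ⟨h1, h2⟩⟩
    · exact ⟨0, fun h' => absurd h' h⟩
  choose aF haF using stS
  -- the bit sets
  set E : ℕ → Set ℝ := fun n => {x | x ∈ Ico (0:ℝ) 1 ∧ n ∈ (stX c x (n+1)).1} with hE
  -- representation of E n as a finite union of intervals
  have hErep : ∀ n, E n = ⋃ K ∈ (Finset.range n).powerset,
      {x | x ∈ Ico (0:ℝ) 1 ∧ (stX c x (n+1)).1 = insert n K} := by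
    intro n
    ext x
    simp only [hE, Set.mem_setOf_eq, Set.mem_iUnion, exists_prop, Finset.mem_powerset]
    constructor
    · rintro ⟨hx, hmem⟩
      refine ⟨(stX c x (n+1)).1.erase n, ?_, hx, (Finset.insert_erase hmem).symm⟩
      intro i hi
      have h1 := Finset.mem_of_mem_erase hi
      have h2 := Finset.ne_of_mem_erase hi
      have := Finset.mem_range.mp (stX_subset x (n+1) h1)
      exact Finset.mem_range.mpr (by omega)
    · rintro ⟨K, hK, hx, hst⟩
      exact ⟨hx, by rw [hst]; exact Finset.mem_insert_self n K⟩
  have hIco : ∀ n, ∀ K ∈ (Finset.range n).powerset,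
      {x | x ∈ Ico (0:ℝ) 1 ∧ (stX c x (n+1)).1 = insert n K}
        = Ico (aF (n+1) (insert n K)) (aF (n+1) (insert n K) + c (n+1) (insert n K)) := by
    intro n K hK
    refine (haF (n+1) (insert n K) ?_).2
    intro i hi
    rcases Finset.mem_insert.mp hi with rfl | hi
    · exact Finset.mem_range.mpr (Nat.lt_succ_self _)
    · have := Finset.mem_range.mp (Finset.mem_powerset.mp hK hi)
      exact Finset.mem_range.mpr (by omega)
  have hEmeas : ∀ n, MeasurableSet (E n) := by
    intro n
    rw [hErep n]
    refine Finset.measurableSet_biUnion _ fun K hK => ?_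
    rw [hIco n K hK]
    exact measurableSet_Ico
  have hEsub : ∀ n, E n ⊆ Ico (0:ℝ) 1 := fun n x hx => hx.1
  -- disjointness of the cylinders at a given level
  have hdisj : ∀ n, ∀ K ∈ (Finset.range n).powerset, ∀ K' ∈ (Finset.range n).powerset,
      K ≠ K' → Disjoint {x | x ∈ Ico (0:ℝ) 1 ∧ (stX c x (n+1)).1 = insert n K}
        {x | x ∈ Ico (0:ℝ) 1 ∧ (stX c x (n+1)).1 = insert n K'} := by
    intro n K hK K' hK' hne
    rw [Set.disjoint_left]
    rintro x ⟨_, h1⟩ ⟨_, h2⟩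
    apply hne
    have hKn : n ∉ K := fun h =>
      by simpa using Finset.mem_range.mp (Finset.mem_powerset.mp hK h)
    have hKn' : n ∉ K' := fun h =>
      by simpa using Finset.mem_range.mp (Finset.mem_powerset.mp hK' h)
    have : insert n K = insert n K' := by rw [← h1, ← h2]
    have := congrArg (fun S => Finset.erase S n) this
    simpa [Finset.erase_insert hKn, Finset.erase_insert hKn'] using this
  -- measure lower bound
  have hEvol : ∀ n, MeasureTheory.volume (E n) ≥ ENNReal.ofReal γ := by
    intro n
    rw [hErep n]
    rw [MeasureTheory.measure_biUnion_finset ?_ ?_]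
    · calc ENNReal.ofReal γ
          ≤ ENNReal.ofReal (∑ K ∈ (Finset.range n).powerset, c (n+1) (insert n K)) :=
            ENNReal.ofReal_le_ofReal (cmarg n)
        _ = ∑ K ∈ (Finset.range n).powerset, ENNReal.ofReal (c (n+1) (insert n K)) :=
            ENNReal.ofReal_sum_of_nonneg (fun K _ => cnn _ _)
        _ ≤ ∑ K ∈ (Finset.range n).powerset,
              MeasureTheory.volume {x | x ∈ Ico (0:ℝ) 1 ∧ (stX c x (n+1)).1 = insert n K} := by
            refine Finset.sum_le_sum fun K hK => ?_
            rw [hIco n K hK, Real.volume_Ico]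
            simp
    · intro K hK K' hK' hne
      exact hdisj n K hK K' hK' hne
    · intro K hK
      rw [hIco n K hK]
      exact measurableSet_Ico
  -- the decreasing unions
  set U : ℕ → Set ℝ := fun N => ⋃ (n : ℕ) (_ : N ≤ n), E n with hU
  have hUmeas : ∀ N, MeasurableSet (U N) :=
    fun N => MeasurableSet.iUnion fun n => MeasurableSet.iUnion fun _ => hEmeas n
  have hUanti : Antitone U := by
    intro N M hNM
    refine Set.iUnion₂_subset fun n hn => ?_
    exact Set.subset_iUnion₂ (s := fun n _ => E n) n (hNM.trans hn)
  have hUvol : ∀ N, ENNReal.ofReal γ ≤ MeasureTheory.volume (U N) := by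
    intro N
    refine le_trans (hEvol N) (MeasureTheory.measure_mono ?_)
    exact Set.subset_iUnion₂ (s := fun n _ => E n) N le_rfl
  have hUfin : MeasureTheory.volume (U 0) ≠ ⊤ := by
    refine ne_top_of_le_ne_top ?_ (MeasureTheory.measure_mono
      (Set.iUnion₂_subset fun n _ => hEsub n))
    simp [Real.volume_Ico]
  have htend := MeasureTheory.tendsto_measure_iInter_atTop
    (μ := MeasureTheory.volume) (fun N => (hUmeas N).nullMeasurableSet) hUanti ⟨0, hUfin⟩
  have hIvol : ENNReal.ofReal γ ≤ MeasureTheory.volume (⋂ N, U N) :=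
    ge_of_tendsto htend (Filter.Eventually.of_forall fun N => hUvol N)
  have hpos : 0 < MeasureTheory.volume (⋂ N, U N) :=
    lt_of_lt_of_le (ENNReal.ofReal_pos.mpr hγ) hIvol
  have hne : (⋂ N, U N).Nonempty :=
    MeasureTheory.nonempty_of_measure_ne_zero hpos.ne'
  obtain ⟨x, hx⟩ := hne
  have hxU : ∀ N, ∃ n, N ≤ n ∧ x ∈ E n := by
    intro N
    have := Set.mem_iInter.mp hx N
    simpa [hU, Set.mem_iUnion] using this
  have hx01 : x ∈ Ico (0:ℝ) 1 := by
    obtain ⟨n, _, hn⟩ := hxU 0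
    exact (hEsub n) hn
  -- the infinite set
  refine ⟨{n | n ∈ (stX c x (n+1)).1}, ?_, ?_⟩
  · refine Set.infinite_of_forall_exists_gt fun a => ?_
    obtain ⟨n, hn, hnE⟩ := hxU (a+1)
    exact ⟨n, hnE.2, by omega⟩
  · intro T hT
    set N : ℕ := T.sup id + 1 with hN
    refine ⟨N, (stX c x N).1, stX_subset x N, ?_, ?_⟩
    · intro i hi
      have hiM : i ∈ (stX c x (i+1)).1 := hT hi
      have hilt : i < N := by
        have := Finset.le_sup (f := id) hi
        simp only [id] at this
        omega
      exact (stX_stable x N (i+1) hilt i (Nat.lt_succ_self i)).mpr hiM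
    · have := (stX_inv c0 cadd hx01 N).2
      have h1 := (stX_inv c0 cadd hx01 N).1
      linarith

/-- From uniformly large masses to an infinite "jointly realizable" set. -/
lemma exists_good {Y : Type*} (B : ℕ → Set Y) (q : ℕ → Y → ℝ)
    (hq0 : ∀ m y, 0 ≤ q m y) (hqs : ∀ m, Summable (q m)) (hq1 : ∀ m, ∑' y, q m y = 1)
    (γ : ℝ) (hγ : 0 < γ)
    (hmass : ∀ m, ∀ i ≤ m, γ ≤ qmass (q m) (B i)) :
    ∃ M : Set ℕ, M.Infinite ∧ ∀ T : Finset ℕ, ↑T ⊆ M →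
      ∃ y, (∃ m, 0 < q m y) ∧ ∀ i ∈ T, y ∈ B i := by
  classical
  set pat : ℕ → Y → Finset ℕ := fun n y => (Finset.range n).filter (fun i => y ∈ B i)
    with hpat
  set P : ℕ → Finset ℕ → Set Y := fun n K => {y | pat n y = K} with hP
  have hpatsub : ∀ n y, pat n y ⊆ Finset.range n := fun n y => Finset.filter_subset _ _
  have hpatsucc : ∀ n y, pat (n+1) y
      = if y ∈ B n then insert n (pat n y) else pat n y := by
    intro n y
    simp only [hpat, Finset.range_add_one, Finset.filter_insert]
  obtain ⟨φ, hφ, hc⟩ := diag (fun (p : ℕ × Finset ℕ) m => qmass (q m) (P p.1 p.2))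
    (fun p m => ⟨qmass_nonneg (hq0 m), qmass_le_one (hq0 m) (hqs m) (hq1 m)⟩)
  choose c hcv using hc
  set C : ℕ → Finset ℕ → ℝ := fun n K => c (n, K) with hC
  -- c 0 ∅ = 1
  have hc0 : C 0 ∅ = 1 := by
    refine tendsto_nhds_unique (hcv (0, ∅)) ?_
    have : ∀ k, qmass (q (φ k)) (P 0 ∅) = 1 := by
      intro k
      have : P 0 ∅ = Set.univ := by
        ext y; simp [hP, hpat]
      rw [this, qmass_univ (hq1 _)]
    simp only [this]
    exact tendsto_const_nhds
  -- nonnegativity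
  have hcnn : ∀ n K, 0 ≤ C n K := by
    intro n K
    exact le_of_tendsto_of_tendsto' tendsto_const_nhds (hcv (n, K))
      (fun k => qmass_nonneg (hq0 _))
  -- additivity
  have hcadd : ∀ n K, n ∉ K → C n K = C (n+1) K + C (n+1) (insert n K) := by
    intro n K hnK
    have hsplit : ∀ m, qmass (q m) (P n K)
        = qmass (q m) (P (n+1) K) + qmass (q m) (P (n+1) (insert n K)) := by
      intro m
      have hset : P n K = P (n+1) K ∪ P (n+1) (insert n K) := by
        ext y
        simp only [hP, Set.mem_setOf_eq, Set.mem_union]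
        constructor
        · intro h
          rw [hpatsucc n y]
          by_cases hy : y ∈ B n
          · rw [if_pos hy, h]; right; rfl
          · rw [if_neg hy, h]; left; rfl
        · intro h
          rcases h with h | h
          · rw [hpatsucc n y] at h
            split_ifs at h with hy
            · exfalso
              apply hnK
              have : n ∈ insert n (pat n y) := Finset.mem_insert_self _ _
              rwa [h] at this
            · exact h
          · rw [hpatsucc n y] at h
            split_ifs at h with hy
            · have h1 : pat n y = (insert n (pat n y)).erase n :=
                (Finset.erase_insert (fun hmem =>
                  by simpa using Finset.mem_range.mp (hpatsub n y hmem))).symm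
              rw [h1, h, Finset.erase_insert hnK]
            · exfalso
              have : n ∈ pat n y := by rw [h]; exact Finset.mem_insert_self _ _
              simpa using Finset.mem_range.mp (hpatsub n y this)
      have hdis : Disjoint (P (n+1) K) (P (n+1) (insert n K)) := by
        rw [Set.disjoint_left]
        rintro y h1 h2
        simp only [hP, Set.mem_setOf_eq] at h1 h2
        apply hnK
        have : n ∈ insert n K := Finset.mem_insert_self _ _
        rw [← h2, h1] at this
        exact this
      rw [hset, qmass_union (hq0 m) (hqs m) hdis]
    refine tendsto_nhds_unique (hcv (n, K)) ?_
    have := (hcv (n+1, K)).add (hcv (n+1, insert n K))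
    simp only [← hsplit] at this
    exact this
  -- marginals
  have hcmarg : ∀ n, γ ≤ ∑ K ∈ (Finset.range n).powerset, C (n+1) (insert n K) := by
    intro n
    have hpart : ∀ m, qmass (q m) (B n)
        = ∑ K ∈ (Finset.range n).powerset, qmass (q m) (P (n+1) (insert n K)) := by
      intro m
      rw [← qmass_biUnion (hq0 m) (hqs m)]
      · congr 1
        ext y
        simp only [Set.mem_iUnion, exists_prop, Finset.mem_powerset, hP, Set.mem_setOf_eq]
        constructor
        · intro hy
          refine ⟨pat n y, hpatsub n y, ?_⟩
          rw [hpatsucc n y, if_pos hy]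
        · rintro ⟨K, hK, hy⟩
          have : n ∈ pat (n+1) y := by rw [hy]; exact Finset.mem_insert_self _ _
          simp only [hpat, Finset.mem_filter] at this
          exact this.2
      · intro K hK K' hK' hne
        rw [Set.disjoint_left]
        rintro y h1 h2
        simp only [hP, Set.mem_setOf_eq] at h1 h2
        apply hne
        have hKn : n ∉ K := fun h =>
          by simpa using Finset.mem_range.mp (Finset.mem_powerset.mp hK h)
        have hKn' : n ∉ K' := fun h =>
          by simpa using Finset.mem_range.mp (Finset.mem_powerset.mp hK' h)
        have : insert n K = insert n K' := by rw [← h1, ← h2]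
        have := congrArg (fun S => Finset.erase S n) this
        simpa [Finset.erase_insert hKn, Finset.erase_insert hKn'] using this
    have htendsum : Tendsto (fun k => ∑ K ∈ (Finset.range n).powerset,
        qmass (q (φ k)) (P (n+1) (insert n K))) atTop
        (𝓝 (∑ K ∈ (Finset.range n).powerset, C (n+1) (insert n K))) := by
      exact tendsto_finset_sum _ (fun K _ => hcv (n+1, insert n K))
    refine ge_of_tendsto htendsum ?_
    filter_upwards [eventually_ge_atTop n] with k hk
    rw [← hpart (φ k)]
    exact hmass (φ k) n (le_trans hk (hφ.le_apply))
  obtain ⟨M, hMinf, hMT⟩ := interval_main C γ hγ hc0 hcnn hcadd hcmarg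
  refine ⟨M, hMinf, ?_⟩
  intro T hT
  obtain ⟨N, K, hKr, hTK, hpos⟩ := hMT T hT
  obtain ⟨k, hk⟩ := ((hcv (N, K)).eventually (Ioi_mem_nhds hpos)).exists
  obtain ⟨y, hyP, hyq⟩ := qmass_pos_exists (hq0 (φ k)) hk
  refine ⟨y, ⟨φ k, hyq⟩, ?_⟩
  intro i hi
  have hiK : i ∈ pat N y := by
    have : pat N y = K := hyP
    rw [this]
    exact hTK hi
  simp only [hpat, Finset.mem_filter] at hiK
  exact hiK.2

/-- Central contradiction: a one-sided convexification cannot have distinct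
iterated limits `L < L'` when `f` has the double limit property. -/
lemma central {A : Type*} {Y : Type*} (f : A → Y → ℝ)
    (hf : ∀ x y, f x y ∈ Set.Icc (0:ℝ) 1) (hDLP : DLP f)
    (a : ℕ → A) (q : ℕ → Y → ℝ) (hq : ∀ j, IsConvDelta (q j))
    (u v : ℕ → ℝ) (L L' : ℝ)
    (hu : ∀ i, Tendsto (fun j => ∑' y, q j y * f (a i) y) atTop (𝓝 (u i)))
    (huL : Tendsto u atTop (𝓝 L))
    (hv : ∀ j, Tendsto (fun i => ∑' y, q j y * f (a i) y) atTop (𝓝 (v j)))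
    (hvL : Tendsto v atTop (𝓝 L'))
    (hLL : L < L') : False := by
  classical
  have hq0 : ∀ j y, 0 ≤ q j y := fun j => (hq j).1
  have hqs : ∀ j, Summable (q j) := fun j => (hq j).2.2.summable
  have hq1 : ∀ j, ∑' y, q j y = 1 := fun j => (hq j).2.2.tsum_eq
  -- countable union of supports
  have hY0 : (⋃ j, Function.support (q j)).Countable :=
    Set.countable_iUnion (fun j => (hq j).2.1)
  have hq0ne : q 0 ≠ 0 := by
    intro h
    have h2 := (hq 0).2.2
    rw [h] at h2
    have h1 := h2.unique hasSum_zero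
    norm_num at h1
  obtain ⟨y00, hy00⟩ := Function.support_nonempty_iff.mpr hq0ne
  have hsupne : (⋃ j, Function.support (q j)).Nonempty :=
    ⟨y00, Set.mem_iUnion.mpr ⟨0, hy00⟩⟩
  obtain ⟨e, he⟩ := Set.Countable.exists_eq_range hY0 hsupne
  have hsupp : ∀ j y, q j y ≠ 0 → y ∈ Set.range e := by
    intro j y hy
    rw [← he]
    exact Set.mem_iUnion.mpr ⟨j, hy⟩
  -- first diagonal extraction (rows converge on the support)
  obtain ⟨φ₁, hφ₁, hconv⟩ := diag (fun n k => f (a k) (e n)) (fun n k => hf _ _)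
  choose w hw using hconv
  have hφYex : ∃ φY : Y → ℝ,
      (∀ y ∈ Set.range e, Tendsto (fun k => f (a (φ₁ k)) y) atTop (𝓝 (φY y)))
      ∧ (∀ y, φY y ∈ Set.Icc (0:ℝ) 1) := by
    refine ⟨fun y => if h : ∃ n, e n = y then w h.choose else 0, ?_, ?_⟩
    · rintro y ⟨n, rfl⟩
      have hex : ∃ m, e m = e n := ⟨n, rfl⟩
      simp only [dif_pos hex]
      have := hw hex.choose
      rwa [hex.choose_spec] at this
    · intro y
      by_cases h : ∃ n, e n = y
      · simp only [dif_pos h]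
        exact isClosed_Icc.mem_of_tendsto (hw h.choose)
          (Filter.Eventually.of_forall fun k => hf _ _)
      · simp only [dif_neg h]
        exact ⟨le_refl 0, zero_le_one⟩
  obtain ⟨φY, hφY, hφY01⟩ := hφYex
  -- the value of v
  have hvq : ∀ j, Tendsto (fun k => ∑' y, q j y * f (a (φ₁ k)) y) atTop
      (𝓝 (∑' y, q j y * φY y)) := by
    intro j
    refine tendsto_tsum_of_dominated_convergence (hqs j) ?_ ?_
    · intro y
      by_cases hy : q j y = 0
      · simp only [hy, zero_mul]
        exact tendsto_const_nhds
      · exact (hφY y (hsupp j y hy)).const_mul _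
    · refine Filter.Eventually.of_forall (fun k y => ?_)
      rw [Real.norm_eq_abs, abs_mul, abs_of_nonneg (hq0 j y),
        abs_of_nonneg (hf _ y).1]
      calc q j y * f (a (φ₁ k)) y ≤ q j y * 1 :=
            mul_le_mul_of_nonneg_left (hf _ y).2 (hq0 j y)
        _ = q j y := mul_one _
  have hvj : ∀ j, v j = ∑' y, q j y * φY y := by
    intro j
    refine tendsto_nhds_unique ?_ (hvq j)
    exact (hv j).comp hφ₁.tendsto_atTop
  have hvL' : Tendsto (fun j => ∑' y, q j y * φY y) atTop (𝓝 L') :=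
    hvL.congr (fun j => hvj j)
  -- reindex rows so that u is small
  set γ : ℝ := (L' - L)/4 with hγdef
  have hγ : 0 < γ := by rw [hγdef]; linarith
  have hev : ∀ᶠ i in atTop, u (φ₁ i) < L + γ := by
    have : Tendsto (fun i => u (φ₁ i)) atTop (𝓝 L) := huL.comp hφ₁.tendsto_atTop
    exact this.eventually (eventually_lt_nhds (by linarith))
  obtain ⟨I₀, hI₀⟩ := eventually_atTop.mp hev
  set a2 : ℕ → A := fun i => a (φ₁ (i + I₀)) with ha2
  have hu2 : ∀ i, Tendsto (fun j => ∑' y, q j y * f (a2 i) y) atTop (𝓝 (u (φ₁ (i + I₀)))) :=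
    fun i => hu (φ₁ (i + I₀))
  have hu2small : ∀ i, u (φ₁ (i + I₀)) < L + γ := fun i => hI₀ (i + I₀) (Nat.le_add_left _ _)
  -- the difference functions
  have hD1 : ∀ i y, |φY y - f (a2 i) y| ≤ 1 := by
    intro i y
    have h1 := hφY01 y
    have h2 := hf (a2 i) y
    rw [abs_le]
    constructor <;> [linarith [h1.1, h2.2]; linarith [h1.2, h2.1]]
  have hDlim : ∀ i, Tendsto (fun j => ∑' y, q j y * (φY y - f (a2 i) y)) atTop
      (𝓝 (L' - u (φ₁ (i + I₀)))) := by
    intro i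
    have hrw : ∀ j, ∑' y, q j y * (φY y - f (a2 i) y)
        = (∑' y, q j y * φY y) - ∑' y, q j y * f (a2 i) y := by
      intro j
      rw [← Summable.tsum_sub (summable_mul_bdd (hq0 j) (hqs j) (fun y => abs_le.mpr
          ⟨by linarith [(hφY01 y).1], (hφY01 y).2⟩))
        (summable_mul_bdd (hq0 j) (hqs j) (fun y => abs_le.mpr
          ⟨by linarith [(hf (a2 i) y).1], (hf (a2 i) y).2⟩))]
      congr 1
      ext y
      ring
    have := hvL'.sub (hu2 i)
    refine Tendsto.congr (fun j => (hrw j).symm) this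
  -- superlevel masses are eventually at least γ
  have hmassev : ∀ i, ∀ᶠ j in atTop, γ ≤ qmass (q j) {y | γ < φY y - f (a2 i) y} := by
    intro i
    have h3γ : 2*γ < L' - u (φ₁ (i + I₀)) := by
      have := hu2small i
      rw [hγdef] at this ⊢
      linarith
    have hev2 := (hDlim i).eventually (eventually_gt_nhds h3γ)
    filter_upwards [hev2] with j hj
    have := qmass_superlevel (hq0 j) (hqs j) (hq1 j) (hD1 i) hγ.le
      (D := fun y => φY y - f (a2 i) y)
    linarith
  choose J hJ using fun i => eventually_atTop.mp (hmassev i)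
  set js : ℕ → ℕ := fun m => (Finset.range (m+1)).sup J with hjs
  have hmass' : ∀ m, ∀ i ≤ m, γ ≤ qmass (q (js m)) {y | γ < φY y - f (a2 i) y} := by
    intro m i him
    refine hJ i (js m) ?_
    exact Finset.le_sup (Finset.mem_range.mpr (by omega))
  -- the infinite jointly-realizable set
  obtain ⟨M, hMinf, hMT⟩ := exists_good (fun i => {y | γ < φY y - f (a2 i) y})
    (fun m => q (js m)) (fun m y => hq0 _ y) (fun m => hqs _) (fun m => hq1 _) γ hγ hmass'
  haveI : Infinite ↥M := hMinf.to_subtype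
  set ι : ℕ → ℕ := fun k => ((Nat.Subtype.orderIsoOfNat M k : ↥M) : ℕ) with hι
  have hιmono : StrictMono ι := by
    intro k l hkl
    have := (Nat.Subtype.orderIsoOfNat M).strictMono hkl
    exact Subtype.coe_lt_coe.mpr this
  have hιM : ∀ k, ι k ∈ M := fun k => (Nat.Subtype.orderIsoOfNat M k).2
  -- witnesses
  have hwit : ∀ l : ℕ, ∃ y, y ∈ Set.range e ∧ ∀ k ≤ l, γ < φY y - f (a2 (ι k)) y := by
    intro l
    have hTsub : ↑((Finset.range (l+1)).image ι) ⊆ M := by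
      intro i hi
      simp only [Finset.coe_image, Set.mem_image, Finset.mem_coe] at hi
      obtain ⟨k, _, rfl⟩ := hi
      exact hιM k
    obtain ⟨y, ⟨m, hym⟩, hyB⟩ := hMT ((Finset.range (l+1)).image ι) hTsub
    refine ⟨y, hsupp _ y hym.ne', ?_⟩
    intro k hk
    exact hyB (ι k) (Finset.mem_image_of_mem ι (Finset.mem_range.mpr (by omega)))
  choose y0 hy0e hy0B using hwit
  -- extract convergence of φY along the witnesses
  obtain ⟨ψa, hψa, hΦex⟩ := diag (fun (_ : Unit) l => φY (y0 l)) (fun _ l => hφY01 _)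
  obtain ⟨Φ, hΦ⟩ := hΦex ()
  set y1 : ℕ → Y := fun t => y0 (ψa t) with hy1
  -- extract inner limits over the witness sequence
  obtain ⟨φ₂, hφ₂, hw2ex⟩ := diag (fun k r => f (a2 (ι k)) (y1 r)) (fun k r => hf _ _)
  choose w2 hw2 using hw2ex
  set y2 : ℕ → Y := fun r => y1 (φ₂ r) with hy2
  have hΦ2 : Tendsto (fun r => φY (y2 r)) atTop (𝓝 Φ) := hΦ.comp hφ₂.tendsto_atTop
  have hpat : ∀ k r, k ≤ r → γ < φY (y2 r) - f (a2 (ι k)) (y2 r) := by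
    intro k r hkr
    refine hy0B (ψa (φ₂ r)) k ?_
    calc k ≤ r := hkr
      _ ≤ φ₂ r := hφ₂.le_apply
      _ ≤ ψa (φ₂ r) := hψa.le_apply
  have hw2le : ∀ k, w2 k ≤ Φ - γ := by
    intro k
    have h1 : Tendsto (fun r => φY (y2 r) - γ) atTop (𝓝 (Φ - γ)) :=
      hΦ2.sub tendsto_const_nhds
    refine le_of_tendsto_of_tendsto (hw2 k) h1 ?_
    filter_upwards [eventually_ge_atTop k] with r hr
    have := hpat k r hr
    linarith
  -- last extraction: outer limit of the w2
  have hw201 : ∀ k, w2 k ∈ Set.Icc (0:ℝ) 1 := fun k =>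
    isClosed_Icc.mem_of_tendsto (hw2 k) (Filter.Eventually.of_forall fun r => hf _ _)
  obtain ⟨φ₃, hφ₃, hWex⟩ := diag (fun (_ : Unit) k => w2 k) (fun _ k => hw201 k)
  obtain ⟨W, hW⟩ := hWex ()
  have hWle : W ≤ Φ - γ :=
    le_of_tendsto hW (Filter.Eventually.of_forall fun k => hw2le (φ₃ k))
  -- apply the double limit property
  have hrow : ∀ r, Tendsto (fun k => f (a2 (ι (φ₃ k))) (y2 r)) atTop (𝓝 (φY (y2 r))) := by
    intro r
    have hbase := hφY (y2 r) ?_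
    · have hσ : StrictMono (fun k => ι (φ₃ k) + I₀) := by
        intro k l hkl
        have := hιmono (hφ₃ hkl)
        show ι (φ₃ k) + I₀ < ι (φ₃ l) + I₀
        omega
      exact hbase.comp hσ.tendsto_atTop
    · rw [hy2, hy1]
      exact hy0e _
  have hcol : ∀ k, Tendsto (fun r => f (a2 (ι (φ₃ k))) (y2 r)) atTop (𝓝 (w2 (φ₃ k))) :=
    fun k => hw2 (φ₃ k)
  have := hDLP (fun k => a2 (ι (φ₃ k))) y2 (fun k => w2 (φ₃ k)) (fun r => φY (y2 r))
    W Φ hcol hW hrow hΦ2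
  rw [this] at hWle
  linarith

/-- One-sided convexification preserves the double limit property. -/
lemma dlp_avg {A : Type*} {Y : Type*} (f : A → Y → ℝ)
    (hf : ∀ x y, f x y ∈ Set.Icc (0:ℝ) 1) (h : DLP f) :
    DLP (fun (x : A) (q : {q : Y → ℝ // IsConvDelta q}) => ∑' y, q.1 y * f x y) := by
  intro a b u v L L' hu huL hv hvL
  by_contra hne
  rcases lt_or_gt_of_ne hne with hlt | hgt
  · exact central f hf h a (fun j => (b j).1) (fun j => (b j).2) u v L L' hu huL hv hvL hlt
  · have hf' : ∀ x y, 1 - f x y ∈ Set.Icc (0:ℝ) 1 :=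
      fun x y => ⟨by linarith [(hf x y).2], by linarith [(hf x y).1]⟩
    have hrw : ∀ i j, (∑' y, (b j).1 y * (1 - f (a i) y))
        = 1 - ∑' y, (b j).1 y * f (a i) y := by
      intro i j
      have h1 : Summable ((b j).1) := (b j).2.2.2.summable
      have h2 : Summable (fun y => (b j).1 y * f (a i) y) :=
        summable_mul_bdd (b j).2.1 h1 (fun y => abs_le.mpr
          ⟨by linarith [(hf (a i) y).1], (hf (a i) y).2⟩)
      calc ∑' y, (b j).1 y * (1 - f (a i) y)
          = ∑' y, ((b j).1 y - (b j).1 y * f (a i) y) := by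
            congr 1; ext y; ring
        _ = (∑' y, (b j).1 y) - ∑' y, (b j).1 y * f (a i) y := Summable.tsum_sub h1 h2
        _ = 1 - ∑' y, (b j).1 y * f (a i) y := by rw [(b j).2.2.2.tsum_eq]
    refine central (fun x y => 1 - f x y) hf' (dlp_oneSub h) a (fun j => (b j).1)
      (fun j => (b j).2) (fun i => 1 - u i) (fun j => 1 - v j) (1 - L) (1 - L')
      ?_ ?_ ?_ ?_ (by linarith)
    · intro i
      refine ((hu i).const_sub 1).congr fun j => (hrw i j).symm
    · simpa using huL.const_sub 1
    · intro j
      refine ((hv j).const_sub 1).congr fun i => (hrw i j).symm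
    · simpa using hvL.const_sub 1

open Classical in
/-- The easy direction: restricting `f_c` to Dirac deltas recovers `f`. -/
lemma dlp_of_dlp_fc {X Y : Type*} (f : X → Y → ℝ)
    (hc : DLP (fun (p : {p : X → ℝ // IsConvDelta p}) (q : {q : Y → ℝ // IsConvDelta q}) =>
      fc f p.1 q.1)) : DLP f := by
  intro a b u v L L' hu huL hv hvL
  have key : ∀ i j, fc f (fun x' => if x' = a i then (1:ℝ) else 0)
      (fun y' => if y' = b j then (1:ℝ) else 0) = f (a i) (b j) := by
    intro i j
    exact fc_delta f (a i) (b j)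
  exact hc (fun i => ⟨_, isConvDelta_delta (a i)⟩) (fun j => ⟨_, isConvDelta_delta (b j)⟩)
    u v L L'
    (fun i => (hu i).congr fun j => (key i j).symm) huL
    (fun j => (hv j).congr fun i => (key i j).symm) hvL


end DLPWork

end DLPAux

/-- a `[0,1]`-valued function `f` on `X × Y` has the double limit
property iff its convex extension `f_c` on `conv_δ(X) × conv_δ(Y)` does. -/
theorem dlp_iff_dlp_convex {X Y : Type*} (f : X → Y → ℝ)
    (hf : ∀ x y, f x y ∈ Set.Icc (0 : ℝ) 1) :
    DLP f ↔
      DLP (fun (p : {p : X → ℝ // IsConvDelta p}) (q : {q : Y → ℝ // IsConvDelta q}) =>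
        fc f p.1 q.1) := by
  constructor
  · intro h
    have F1 := DLPWork.dlp_avg f hf h
    have F2 := DLPWork.dlp_flip F1
    have hb2 : ∀ (q : {q : Y → ℝ // IsConvDelta q}) (x : X),
        (∑' y, q.1 y * f x y) ∈ Set.Icc (0:ℝ) 1 := by
      intro q x
      exact ⟨DLPWork.pair_nonneg q.2.1 (fun y => (hf x y).1),
        DLPWork.pair_le_one q.2.1 q.2.2.2.summable q.2.2.2.tsum_eq (fun y => hf x y)⟩
    have F3 := DLPWork.dlp_avg (fun (q : {q : Y → ℝ // IsConvDelta q}) (x : X) =>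
      ∑' y, q.1 y * f x y) hb2 F2
    have F4 := DLPWork.dlp_flip F3
    have heq : (fun (p : {p : X → ℝ // IsConvDelta p}) (q : {q : Y → ℝ // IsConvDelta q}) =>
        fc f p.1 q.1) = fun p q => ∑' x, p.1 x * ∑' y, q.1 y * f x y := by
      funext p q
      show (∑' z : X × Y, p.1 z.1 * q.1 z.2 * f z.1 z.2) = _
      exact DLPWork.fc_eq f hf p.2 q.2
    rw [heq]
    exact F4
  · intro h
    exact DLPWork.dlp_of_dlp_fc f h
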